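/- Let f, g : [1,∞) → ℂ be absolutely continuous, vanishing at r = 1 and at infinity, with f', g' ∈ L²([1,∞), r² dr). Then the product fg satisfies ‖(fg)'‖_{L²(r²dr)} ≤ C (‖f'‖_{L²(r²dr)} + ‖g'‖_{L²(r²dr)})(‖f'‖_{L²(r²dr)} + ‖g'‖_{L²(r²dr)}) for some absolute constant C; i.e., the radial homogeneous Sobolev space Ḣ¹₀(Ω) on Ω = ℝ³ \ B(0,1) is an algebra under pointwise multiplication. -/

import Mathlib

open MeasureTheory Filter Set

set_option maxHeartbeats 1000000

lemma radial_embed (f f' : ℝ → ℂ)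
    (hf : ∀ r, 1 ≤ r → HasDerivAt f (f' r) r)
    (hf0 : Tendsto f atTop (nhds 0))
    (hfi : IntegrableOn (fun r => ‖f' r‖ ^ 2 * r ^ 2) (Ioi (1:ℝ))) :
    ∀ r, 1 ≤ r → ‖f r‖ ≤ (∫ s in Ioi (1:ℝ), ‖f' s‖ ^ 2 * s ^ 2) ^ ((1:ℝ)/2) := by
  intro r hr
  set F : ℝ := (∫ s in Ioi (1:ℝ), ‖f' s‖ ^ 2 * s ^ 2) ^ ((1:ℝ)/2) with hFdef
  have hmeas : AEStronglyMeasurable f' (volume.restrict (Ioi (1:ℝ))) := by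
    refine (measurable_deriv f).aestronglyMeasurable.congr ?_
    filter_upwards [ae_restrict_mem measurableSet_Ioi] with s hs
    exact ((hf s hs.le).deriv)
  have hmeasr : AEStronglyMeasurable f' (volume.restrict (Ioi r)) :=
    hmeas.mono_measure (Measure.restrict_mono (Ioi_subset_Ioi hr) le_rfl)
  have hA : MemLp (fun s => ‖f' s‖ * s) 2 (volume.restrict (Ioi (1:ℝ))) := by
    refine (memLp_two_iff_integrable_sq ?_).mpr ?_
    · exact hmeas.norm.mul aestronglyMeasurable_id
    · exact hfi.congr_fun (fun s _ => by simp [mul_pow]) measurableSet_Ioi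
  have hAr : MemLp (fun s => ‖f' s‖ * s) 2 (volume.restrict (Ioi r)) :=
    hA.mono_measure (Measure.restrict_mono (Ioi_subset_Ioi hr) le_rfl)
  have hrpos : (0:ℝ) < r := lt_of_lt_of_le one_pos hr
  have hBint : IntegrableOn (fun s : ℝ => (s⁻¹) ^ 2) (Ioi r) := by
    refine (integrableOn_Ioi_rpow_of_lt (by norm_num : (-2:ℝ) < -1) hrpos).congr_fun
      (fun s hs => ?_) measurableSet_Ioi
    have hs0 : (0:ℝ) < s := lt_trans hrpos hs
    show s ^ (-2:ℝ) = s⁻¹ ^ 2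
    rw [Real.rpow_neg hs0.le, Real.rpow_two, ← inv_pow]
  have hB : MemLp (fun s : ℝ => s⁻¹) 2 (volume.restrict (Ioi r)) := by
    refine (memLp_two_iff_integrable_sq ?_).mpr hBint
    exact (measurable_id.inv).aestronglyMeasurable
  have hnormint : IntegrableOn (fun s => ‖f' s‖) (Ioi r) := by
    have h1 := MemLp.smul (p := 2) (q := 2) (r := 1)
      (f := fun s => ‖f' s‖ * s) (φ := fun s : ℝ => s⁻¹) hAr hB
    have h2 := memLp_one_iff_integrable.mp h1
    refine h2.congr ?_
    filter_upwards [ae_restrict_mem measurableSet_Ioi] with s hs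
    have hs0 : s ≠ 0 := (lt_trans hrpos hs).ne'
    show s⁻¹ • (‖f' s‖ * s) = ‖f' s‖
    rw [smul_eq_mul]
    field_simp
  have hfint : IntegrableOn f' (Ioi r) := by
    refine hnormint.mono' hmeasr ?_
    filter_upwards with s using le_rfl
  have hconj : Real.HolderConjugate 2 2 := Real.HolderConjugate.two_two
  have hIpos : (0:ℝ) ≤ ∫ s in Ioi (1:ℝ), ‖f' s‖ ^ 2 * s ^ 2 :=
    integral_nonneg fun s => by positivity
  have hF2 : ∫ s in Ioi r, ‖f' s‖ ≤ F := by
    have heq : ∫ s in Ioi r, ‖f' s‖ = ∫ s in Ioi r, (‖f' s‖ * s) * s⁻¹ := by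
      refine setIntegral_congr_fun measurableSet_Ioi (fun s hs => ?_)
      have hs0 : s ≠ 0 := (lt_trans hrpos hs).ne'
      field_simp
    have hH := integral_mul_le_Lp_mul_Lq_of_nonneg hconj
      (μ := volume.restrict (Ioi r)) (f := fun s => ‖f' s‖ * s) (g := fun s : ℝ => s⁻¹)
      ?_ ?_ (by simpa using hAr) (by simpa using hB)
    · simp only [Real.rpow_two] at hH
      rw [heq]
      refine hH.trans ?_
      have hmono : ∫ s in Ioi r, (‖f' s‖ * s) ^ 2 ≤ ∫ s in Ioi (1:ℝ), ‖f' s‖ ^ 2 * s ^ 2 := by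
        have he : ∫ s in Ioi r, (‖f' s‖ * s) ^ 2 = ∫ s in Ioi r, ‖f' s‖ ^ 2 * s ^ 2 := by
          refine setIntegral_congr_fun measurableSet_Ioi (fun s hs => ?_)
          rw [mul_pow]
        rw [he]
        refine setIntegral_mono_set hfi ?_ (HasSubset.Subset.eventuallyLE (Ioi_subset_Ioi hr))
        filter_upwards with s using by positivity
      have hBval : ∫ s in Ioi r, (s⁻¹:ℝ) ^ 2 ≤ 1 := by
        have he : ∫ s in Ioi r, (s⁻¹:ℝ) ^ 2 = ∫ s in Ioi r, s ^ (-2:ℝ) := by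
          refine setIntegral_congr_fun measurableSet_Ioi (fun s hs => ?_)
          have hs0 : (0:ℝ) < s := lt_trans hrpos hs
          rw [Real.rpow_neg hs0.le, Real.rpow_two, ← inv_pow]
        rw [he, integral_Ioi_rpow_of_lt (by norm_num) hrpos]
        have h2 : -r ^ (-2 + 1 : ℝ) / (-2 + 1) = r ^ (-2 + 1 : ℝ) := by ring
        have hrr : r ^ (-2 + 1 : ℝ) = r⁻¹ := by
          rw [show (-2 + 1 : ℝ) = -1 by norm_num, Real.rpow_neg_one]
        rw [h2, hrr]
        exact inv_le_one_of_one_le₀ hr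
      have hint2pos : (0:ℝ) ≤ ∫ s in Ioi r, (‖f' s‖ * s) ^ 2 :=
        integral_nonneg fun s => by positivity
      have hintBpos : (0:ℝ) ≤ ∫ s in Ioi r, (s⁻¹:ℝ) ^ 2 :=
        integral_nonneg fun s => by positivity
      have hfinal := mul_le_mul
        (Real.rpow_le_rpow hint2pos hmono (by norm_num : (0:ℝ) ≤ 1/2))
        (Real.rpow_le_rpow hintBpos hBval (by norm_num : (0:ℝ) ≤ 1/2))
        (Real.rpow_nonneg hintBpos _) (Real.rpow_nonneg hIpos _)
      rw [Real.one_rpow, mul_one] at hfinal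
      exact hfinal
    · filter_upwards [ae_restrict_mem measurableSet_Ioi] with s hs
      exact mul_nonneg (norm_nonneg _) (le_trans hrpos.le (le_of_lt hs))
    · filter_upwards [ae_restrict_mem measurableSet_Ioi] with s hs
      exact inv_nonneg.mpr (lt_trans hrpos hs).le
  have hbound : ∀ R, r ≤ R → ‖f r - f R‖ ≤ ∫ s in Ioi r, ‖f' s‖ := by
    intro R hR
    have hftc : ∫ s in r..R, f' s = f R - f r := by
      refine intervalIntegral.integral_eq_sub_of_hasDerivAt (fun x hx => ?_) ?_
      · exact hf x (le_trans hr ((uIcc_of_le hR ▸ hx).1))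
      · rw [intervalIntegrable_iff]
        exact hfint.mono_set (by rw [uIoc_of_le hR]; exact Ioc_subset_Ioi_self)
    have h1 : ‖f r - f R‖ = ‖∫ s in r..R, f' s‖ := by
      rw [hftc, norm_sub_rev]
    rw [h1]
    refine (intervalIntegral.norm_integral_le_integral_norm hR).trans ?_
    rw [intervalIntegral.integral_of_le hR]
    refine setIntegral_mono_set hnormint ?_ (HasSubset.Subset.eventuallyLE Ioc_subset_Ioi_self)
    filter_upwards with s using norm_nonneg _
  have hlim : Tendsto (fun R => ‖f r - f R‖) atTop (nhds ‖f r‖) := by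
    have := (tendsto_const_nhds (x := f r)).sub hf0
    simpa using this.norm
  have hfin : ‖f r‖ ≤ ∫ s in Ioi r, ‖f' s‖ := by
    refine le_of_tendsto hlim ?_
    filter_upwards [eventually_ge_atTop r] with R hR using hbound R hR
  exact hfin.trans hF2

/-- Radial `Ḣ¹₀(Ω)`, `Ω = ℝ³ \ B(0,1)`, is an algebra under multiplication. -/
theorem stmt_4 :
    ∃ C : ℝ, 0 < C ∧
      ∀ f g f' g' : ℝ → ℂ,
        (∀ r, 1 ≤ r → HasDerivAt f (f' r) r) →
        (∀ r, 1 ≤ r → HasDerivAt g (g' r) r) →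
        f 1 = 0 → g 1 = 0 →
        Tendsto f atTop (nhds 0) → Tendsto g atTop (nhds 0) →
        IntegrableOn (fun r => ‖f' r‖ ^ 2 * r ^ 2) (Ioi (1 : ℝ)) →
        IntegrableOn (fun r => ‖g' r‖ ^ 2 * r ^ 2) (Ioi (1 : ℝ)) →
        (∫ r in Ioi (1:ℝ), ‖f' r * g r + f r * g' r‖ ^ 2 * r ^ 2) ^ ((1:ℝ)/2) ≤
          C * ((∫ r in Ioi (1:ℝ), ‖f' r‖ ^ 2 * r ^ 2) ^ ((1:ℝ)/2) +
                (∫ r in Ioi (1:ℝ), ‖g' r‖ ^ 2 * r ^ 2) ^ ((1:ℝ)/2)) *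
              ((∫ r in Ioi (1:ℝ), ‖f' r‖ ^ 2 * r ^ 2) ^ ((1:ℝ)/2) +
                (∫ r in Ioi (1:ℝ), ‖g' r‖ ^ 2 * r ^ 2) ^ ((1:ℝ)/2)) := by
  refine ⟨2, two_pos, ?_⟩
  intro f g f' g' hf hg hf1 hg1 hf0 hg0 hfi hgi
  set F : ℝ := (∫ r in Ioi (1:ℝ), ‖f' r‖ ^ 2 * r ^ 2) ^ ((1:ℝ)/2) with hF
  set G : ℝ := (∫ r in Ioi (1:ℝ), ‖g' r‖ ^ 2 * r ^ 2) ^ ((1:ℝ)/2) with hG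
  have hIf : (0:ℝ) ≤ ∫ r in Ioi (1:ℝ), ‖f' r‖ ^ 2 * r ^ 2 :=
    integral_nonneg fun s => by positivity
  have hIg : (0:ℝ) ≤ ∫ r in Ioi (1:ℝ), ‖g' r‖ ^ 2 * r ^ 2 :=
    integral_nonneg fun s => by positivity
  have hF0 : 0 ≤ F := Real.rpow_nonneg hIf _
  have hG0 : 0 ≤ G := Real.rpow_nonneg hIg _
  have hFsq : F ^ 2 = ∫ r in Ioi (1:ℝ), ‖f' r‖ ^ 2 * r ^ 2 := by
    rw [hF, ← Real.rpow_natCast ((∫ r in Ioi (1:ℝ), ‖f' r‖ ^ 2 * r ^ 2) ^ ((1:ℝ)/2)) 2,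
      ← Real.rpow_mul hIf]
    norm_num
  have hGsq : G ^ 2 = ∫ r in Ioi (1:ℝ), ‖g' r‖ ^ 2 * r ^ 2 := by
    rw [hG, ← Real.rpow_natCast ((∫ r in Ioi (1:ℝ), ‖g' r‖ ^ 2 * r ^ 2) ^ ((1:ℝ)/2)) 2,
      ← Real.rpow_mul hIg]
    norm_num
  have hfb := radial_embed f f' hf hf0 hfi
  have hgb := radial_embed g g' hg hg0 hgi
  have hptwise : ∀ r ∈ Ioi (1:ℝ), ‖f' r * g r + f r * g' r‖ ^ 2 * r ^ 2 ≤
      2 * G ^ 2 * (‖f' r‖ ^ 2 * r ^ 2) + 2 * F ^ 2 * (‖g' r‖ ^ 2 * r ^ 2) := by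
    intro r hr
    have h1 : ‖f r‖ ≤ F := hfb r (le_of_lt hr)
    have h2 : ‖g r‖ ≤ G := hgb r (le_of_lt hr)
    have h3 : ‖f' r * g r + f r * g' r‖ ≤ ‖f' r‖ * G + F * ‖g' r‖ := by
      refine (norm_add_le _ _).trans ?_
      rw [norm_mul, norm_mul]
      gcongr
    have h4 : ‖f' r * g r + f r * g' r‖ ^ 2 ≤ (‖f' r‖ * G + F * ‖g' r‖) ^ 2 :=
      pow_le_pow_left₀ (norm_nonneg _) h3 2
    have h5 : ‖f' r * g r + f r * g' r‖ ^ 2 ≤ 2 * G ^ 2 * ‖f' r‖ ^ 2 + 2 * F ^ 2 * ‖g' r‖ ^ 2 := by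
      nlinarith [sq_nonneg (‖f' r‖ * G - F * ‖g' r‖)]
    calc ‖f' r * g r + f r * g' r‖ ^ 2 * r ^ 2
        ≤ (2 * G ^ 2 * ‖f' r‖ ^ 2 + 2 * F ^ 2 * ‖g' r‖ ^ 2) * r ^ 2 :=
          mul_le_mul_of_nonneg_right h5 (sq_nonneg r)
      _ = 2 * G ^ 2 * (‖f' r‖ ^ 2 * r ^ 2) + 2 * F ^ 2 * (‖g' r‖ ^ 2 * r ^ 2) := by ring
  have hRHSint : IntegrableOn
      (fun r => 2 * G ^ 2 * (‖f' r‖ ^ 2 * r ^ 2) + 2 * F ^ 2 * (‖g' r‖ ^ 2 * r ^ 2))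
      (Ioi (1:ℝ)) := (hfi.const_mul _).add (hgi.const_mul _)
  have hle : (∫ r in Ioi (1:ℝ), ‖f' r * g r + f r * g' r‖ ^ 2 * r ^ 2) ≤
      ∫ r in Ioi (1:ℝ), (2 * G ^ 2 * (‖f' r‖ ^ 2 * r ^ 2) + 2 * F ^ 2 * (‖g' r‖ ^ 2 * r ^ 2)) := by
    refine integral_mono_of_nonneg ?_ hRHSint ?_
    · filter_upwards with s using by positivity
    · filter_upwards [ae_restrict_mem measurableSet_Ioi] with s hs using hptwise s hs
  have hRHSval : (∫ r in Ioi (1:ℝ),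
      (2 * G ^ 2 * (‖f' r‖ ^ 2 * r ^ 2) + 2 * F ^ 2 * (‖g' r‖ ^ 2 * r ^ 2))) = (2 * F * G) ^ 2 := by
    rw [integral_add (hfi.const_mul _) (hgi.const_mul _), integral_const_mul, integral_const_mul,
      ← hFsq, ← hGsq]
    ring
  have hLHSpos : (0:ℝ) ≤ ∫ r in Ioi (1:ℝ), ‖f' r * g r + f r * g' r‖ ^ 2 * r ^ 2 :=
    integral_nonneg fun s => by positivity
  have hstep : (∫ r in Ioi (1:ℝ), ‖f' r * g r + f r * g' r‖ ^ 2 * r ^ 2) ^ ((1:ℝ)/2) ≤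
      2 * F * G := by
    have h6 := Real.rpow_le_rpow hLHSpos (hle.trans_eq hRHSval) (by norm_num : (0:ℝ) ≤ 1/2)
    refine h6.trans_eq ?_
    rw [← Real.rpow_natCast (2 * F * G) 2, ← Real.rpow_mul (by positivity)]
    norm_num
  refine hstep.trans ?_
  nlinarith [mul_nonneg hF0 hG0, sq_nonneg (F - G), mul_nonneg (mul_nonneg hF0 hF0) hG0]
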